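/- If A and B are n×n complex Hermitian matrices, then the vector of eigenvalues of A+B (in nonincreasing order) is majorized by the sum of the eigenvalue vectors of A and B (each in nonincreasing order): λ(A+B) ≺ λ(A) + λ(B). -/

import Mathlib

/-- The nonincreasing rearrangement of a finite tuple of reals. -/
noncomputable def decSort {n : ℕ} (x : Fin n → ℝ) : Fin n → ℝ :=
  x ∘ Tuple.sort (fun i => -x i)

/-- Sum of the first `k` entries of a tuple. -/
def pSum {n : ℕ} (x : Fin n → ℝ) (k : ℕ) : ℝ :=
  ∑ i ∈ Finset.univ.filter (fun i : Fin n => (i : ℕ) < k), x i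

/-- `Majorizes x y` means `x ≺ y`: every partial sum of the nonincreasing rearrangement of `x`
is at most the corresponding one for `y`, with equal total sums. -/
def Majorizes {n : ℕ} (x y : Fin n → ℝ) : Prop :=
  (∀ k : ℕ, k < n → pSum (decSort x) k ≤ pSum (decSort y) k) ∧ (∑ i, x i) = ∑ i, y i

open Matrix Finset

lemma antitone_decSort {n : ℕ} (x : Fin n → ℝ) : Antitone (decSort x) := by
  intro i j hij
  have h := Tuple.monotone_sort (fun i => -x i) hij
  simp only [Function.comp_apply] at h
  exact neg_le_neg_iff.mp h

lemma decSort_eq_self {n : ℕ} {y : Fin n → ℝ} (hy : Antitone y) : decSort y = y := by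
  have hm : Monotone (fun i => -y i) := fun i j h => neg_le_neg (hy h)
  unfold decSort
  rw [Tuple.sort_eq_refl_iff_monotone.2 hm]
  rfl

lemma sum_decSort {n : ℕ} (x : Fin n → ℝ) : ∑ i, decSort x i = ∑ i, x i :=
  Equiv.sum_comp (Tuple.sort (fun i => -x i)) x

lemma filter_lt_eq_map {n k : ℕ} (hk : k ≤ n) :
    Finset.univ.filter (fun i : Fin n => (i : ℕ) < k) =
      Finset.univ.map (Fin.castLEEmb hk) := by
  ext j
  simp only [mem_filter, mem_univ, true_and, mem_map, Fin.castLEEmb_apply]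
  constructor
  · intro hj; exact ⟨⟨j, hj⟩, rfl⟩
  · rintro ⟨i, rfl⟩; exact i.2

lemma pSum_castLE {n k : ℕ} (hk : k ≤ n) (y : Fin n → ℝ) :
    pSum y k = ∑ i : Fin k, y (Fin.castLE hk i) := by
  unfold pSum
  rw [filter_lt_eq_map hk, Finset.sum_map]
  rfl

lemma card_filter_lt {n k : ℕ} (hk : k ≤ n) :
    (Finset.univ.filter (fun i : Fin n => (i : ℕ) < k)).card = k := by
  rw [filter_lt_eq_map hk, Finset.card_map, Finset.card_univ, Fintype.card_fin]

/-- Abstract rearrangement inequality: a `[0,1]`-weighted sum with total weight `k`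
is at most the sum of the `k` largest entries. -/
lemma sum_mul_le_pSum {n k : ℕ} (hk : k < n) (x c : Fin n → ℝ)
    (hc0 : ∀ i, 0 ≤ c i) (hc1 : ∀ i, c i ≤ 1) (hcs : ∑ i, c i = k) :
    ∑ i, c i * x i ≤ pSum (decSort x) k := by
  set σ := Tuple.sort (fun i => -x i) with hσ
  set y := decSort x with hy
  set d : Fin n → ℝ := fun i => c (σ i) with hd
  have hrw : ∑ i, c i * x i = ∑ i, d i * y i := by
    rw [← Equiv.sum_comp σ (fun i => c i * x i)]
    rfl
  have hds : ∑ i, d i = k := by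
    rw [← hcs, ← Equiv.sum_comp σ c]
  have hmono : Antitone y := antitone_decSort x
  set t := y ⟨k, hk⟩ with ht
  have key : ∀ i : Fin n, d i * (y i - t) ≤ if (i : ℕ) < k then y i - t else 0 := by
    intro i
    by_cases hik : (i : ℕ) < k
    · rw [if_pos hik]
      have hyt : t ≤ y i := hmono (by simp [Fin.le_def]; omega)
      calc d i * (y i - t) ≤ 1 * (y i - t) :=
            mul_le_mul_of_nonneg_right (hc1 _) (by linarith)
        _ = y i - t := one_mul _
    · rw [if_neg hik]
      have hyt : y i ≤ t := hmono (by simp [Fin.le_def]; omega)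
      exact mul_nonpos_of_nonneg_of_nonpos (hc0 _) (by linarith)
  have h2 : ∑ i, d i * (y i - t) ≤ ∑ i : Fin n, (if (i : ℕ) < k then y i - t else 0) :=
    Finset.sum_le_sum fun i _ => key i
  have h3 : ∑ i : Fin n, (if (i : ℕ) < k then y i - t else 0)
      = pSum y k - k * t := by
    rw [← Finset.sum_filter, Finset.sum_sub_distrib, Finset.sum_const,
      card_filter_lt (le_of_lt hk), nsmul_eq_mul]
    rfl
  have h4 : ∑ i, d i * (y i - t) = ∑ i, d i * y i - (k : ℝ) * t := by
    simp only [mul_sub]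
    rw [Finset.sum_sub_distrib, ← Finset.sum_mul, hds]
  rw [hrw]
  rw [h4, h3] at h2
  linarith

/-- Trace of a Hermitian matrix is the sum of its eigenvalues. -/
lemma trace_eq_sum_eigenvalues {n : ℕ} {M : Matrix (Fin n) (Fin n) ℂ} (hM : M.IsHermitian) :
    M.trace = ∑ i, (hM.eigenvalues i : ℂ) := by
  conv_lhs => rw [hM.spectral_theorem]
  rw [Unitary.conjStarAlgAut_apply, Matrix.trace_mul_cycle, Unitary.coe_star_mul_self, one_mul, Matrix.trace_diagonal]
  rfl

/-- Ky Fan upper bound: for any isometry `V : ℂ^k → ℂ^n`, `re tr(Vᴴ M V)` is at most the sum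
of the `k` largest eigenvalues of the Hermitian matrix `M`. -/
lemma kyFan_le {n k : ℕ} (hk : k < n) {M : Matrix (Fin n) (Fin n) ℂ} (hM : M.IsHermitian)
    (V : Matrix (Fin n) (Fin k) ℂ) (hV : Vᴴ * V = 1) :
    (Vᴴ * M * V).trace.re ≤ pSum (decSort hM.eigenvalues) k := by
  set U : Matrix (Fin n) (Fin n) ℂ := (hM.eigenvectorUnitary : Matrix (Fin n) (Fin n) ℂ) with hU
  have hU2 : U * Uᴴ = 1 := (Matrix.mem_unitaryGroup_iff).mp hM.eigenvectorUnitary.2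
  set W : Matrix (Fin n) (Fin k) ℂ := Uᴴ * V with hWdef
  have hWH : Wᴴ = Vᴴ * U := by
    rw [hWdef, Matrix.conjTranspose_mul, Matrix.conjTranspose_conjTranspose]
  have hW : Wᴴ * W = 1 := by
    rw [hWH, hWdef, Matrix.mul_assoc, ← Matrix.mul_assoc U, hU2, Matrix.one_mul, hV]
  set P : Matrix (Fin n) (Fin n) ℂ := W * Wᴴ with hPdef
  have hPP : P * P = P := by
    rw [hPdef, Matrix.mul_assoc, ← Matrix.mul_assoc Wᴴ W Wᴴ, hW, Matrix.one_mul]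
  have hPherm : Pᴴ = P := by
    rw [hPdef, Matrix.conjTranspose_mul, Matrix.conjTranspose_conjTranspose]
  set c : Fin n → ℝ := fun j => ∑ i, Complex.normSq (W j i) with hc
  have hPc : ∀ j, P j j = (c j : ℂ) := by
    intro j
    rw [hPdef, Matrix.mul_apply]
    simp only [Matrix.conjTranspose_apply, hc]
    push_cast
    refine Finset.sum_congr rfl fun i _ => ?_
    rw [RCLike.star_def, Complex.mul_conj]
  have hc0 : ∀ j, 0 ≤ c j := fun j =>
    Finset.sum_nonneg fun i _ => Complex.normSq_nonneg _
  have hc1 : ∀ j, c j ≤ 1 := by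
    intro j
    have hsq : ((c j : ℂ)) ^ 2 = ((c j) ^ 2 : ℝ) := by push_cast; ring
    have h1 : (c j : ℂ) = ∑ i, (Complex.normSq (P j i) : ℂ) := by
      rw [← hPc j]
      conv_lhs => rw [← hPP]
      rw [Matrix.mul_apply]
      refine Finset.sum_congr rfl fun i _ => ?_
      have : P i j = star (P j i) := by
        conv_lhs => rw [← hPherm]
        rfl
      rw [this, RCLike.star_def, Complex.mul_conj]
    have h2 : c j = ∑ i, Complex.normSq (P j i) := by
      exact_mod_cast h1
    have h3 : Complex.normSq (P j j) ≤ ∑ i, Complex.normSq (P j i) :=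
      Finset.single_le_sum (fun i _ => Complex.normSq_nonneg _) (Finset.mem_univ j)
    have h4 : Complex.normSq (P j j) = (c j) ^ 2 := by
      rw [hPc j]
      simp [Complex.normSq_ofReal, sq]
    nlinarith [hc0 j]
  have hcs : ∑ j, c j = k := by
    have htr : P.trace = (k : ℂ) := by
      rw [hPdef, Matrix.trace_mul_comm, hW, Matrix.trace_one]
      simp
    have : P.trace = ((∑ j, c j : ℝ) : ℂ) := by
      rw [Matrix.trace]
      push_cast
      exact Finset.sum_congr rfl fun j _ => by rw [Matrix.diag_apply, hPc j]
    rw [this] at htr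
    exact_mod_cast htr
  have hkey : Vᴴ * M * V = Wᴴ * (diagonal (RCLike.ofReal ∘ hM.eigenvalues) : Matrix (Fin n) (Fin n) ℂ) * W := by
    conv_lhs => rw [hM.spectral_theorem]
    rw [Unitary.conjStarAlgAut_apply, hWH, hWdef]
    simp only [Matrix.mul_assoc, Matrix.star_eq_conjTranspose, ← hU]
  have htr2 : (Vᴴ * M * V).trace = ∑ j, (hM.eigenvalues j : ℂ) * P j j := by
    rw [hkey, Matrix.trace_mul_cycle, Matrix.trace_mul_comm, ← hPdef]
    rw [Matrix.trace]
    refine Finset.sum_congr rfl fun j _ => ?_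
    rw [Matrix.diag_apply, Matrix.diagonal_mul]
    rfl
  have hre : (Vᴴ * M * V).trace.re = ∑ j, c j * hM.eigenvalues j := by
    rw [htr2]
    have : ∑ j, (hM.eigenvalues j : ℂ) * P j j = ((∑ j, c j * hM.eigenvalues j : ℝ) : ℂ) := by
      push_cast
      refine Finset.sum_congr rfl fun j _ => ?_
      rw [hPc j]; ring
    rw [this, Complex.ofReal_re]
  rw [hre]
  exact sum_mul_le_pSum hk hM.eigenvalues c hc0 hc1 hcs

/-- Ky Fan attainment: the sum of the `k` largest eigenvalues is attained by the isometry
built from the corresponding eigenvectors. -/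
lemma kyFan_attain {n k : ℕ} (hk : k ≤ n) {M : Matrix (Fin n) (Fin n) ℂ} (hM : M.IsHermitian) :
    ∃ V : Matrix (Fin n) (Fin k) ℂ, Vᴴ * V = 1 ∧
      (Vᴴ * M * V).trace.re = pSum (decSort hM.eigenvalues) k := by
  set σ := Tuple.sort (fun i => -hM.eigenvalues i) with hσ
  set g : Fin k → Fin n := fun i => σ (Fin.castLE hk i) with hg
  have hginj : Function.Injective g := fun a b h =>
    Fin.castLE_injective hk (σ.injective h)
  set U : Matrix (Fin n) (Fin n) ℂ := (hM.eigenvectorUnitary : Matrix (Fin n) (Fin n) ℂ) with hU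
  have hU1 : Uᴴ * U = 1 := Unitary.coe_star_mul_self _
  refine ⟨U.submatrix id g, ?_, ?_⟩
  · rw [Matrix.conjTranspose_submatrix,
      ← Matrix.submatrix_mul Uᴴ U g id g Function.bijective_id, hU1]
    ext i j
    simp [Matrix.one_apply, hginj.eq_iff]
  · have hdiag : Uᴴ * M * U = diagonal (RCLike.ofReal ∘ hM.eigenvalues) :=
      by have h := hM.conjStarAlgAut_star_eigenvectorUnitary; rw [Unitary.conjStarAlgAut_star_apply] at h; exact h
    have h1 : (U.submatrix id g)ᴴ * M * U.submatrix id g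
        = (Uᴴ * M * U).submatrix g g := by
      rw [Matrix.conjTranspose_submatrix]
      have hM' : M = M.submatrix id id := rfl
      conv_lhs => rw [hM']
      rw [← Matrix.submatrix_mul Uᴴ M g id id Function.bijective_id,
        ← Matrix.submatrix_mul (Uᴴ * M) U g id g Function.bijective_id]
    rw [h1, hdiag]
    have h2 : ((diagonal (RCLike.ofReal ∘ hM.eigenvalues)).submatrix g g).trace
        = ∑ i : Fin k, (hM.eigenvalues (g i) : ℂ) := by
      rw [Matrix.trace]
      refine Finset.sum_congr rfl fun i _ => ?_
      simp [Matrix.diag_apply, Matrix.diagonal_apply_eq]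
    rw [h2, pSum_castLE hk]
    have : ∑ i : Fin k, (hM.eigenvalues (g i) : ℂ)
        = ((∑ i : Fin k, decSort hM.eigenvalues (Fin.castLE hk i) : ℝ) : ℂ) := by
      push_cast
      rfl
    rw [this, Complex.ofReal_re]

/-- The eigenvalues of `A + B` (nonincreasing) are majorized by the sum of the
nonincreasingly ordered eigenvalues of `A` and of `B`. -/
theorem eigenvalues_add_majorized (n : ℕ) (A B : Matrix (Fin n) (Fin n) ℂ)
    (hA : A.IsHermitian) (hB : B.IsHermitian) (hAB : (A + B).IsHermitian) :
    Majorizes hAB.eigenvalues (decSort hA.eigenvalues + decSort hB.eigenvalues) := by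
  constructor
  · intro k hk
    have hanti : Antitone (decSort hA.eigenvalues + decSort hB.eigenvalues) :=
      (antitone_decSort hA.eigenvalues).add (antitone_decSort hB.eigenvalues)
    rw [decSort_eq_self hanti]
    have hpadd : pSum (decSort hA.eigenvalues + decSort hB.eigenvalues) k
        = pSum (decSort hA.eigenvalues) k + pSum (decSort hB.eigenvalues) k := by
      unfold pSum
      rw [← Finset.sum_add_distrib]
      rfl
    rw [hpadd]
    obtain ⟨V, hV1, hV2⟩ := kyFan_attain (le_of_lt hk) hAB
    rw [← hV2]
    have hsplit : Vᴴ * (A + B) * V = Vᴴ * A * V + Vᴴ * B * V := by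
      rw [Matrix.mul_add, Matrix.add_mul]
    rw [hsplit, Matrix.trace_add, Complex.add_re]
    exact add_le_add (kyFan_le hk hA V hV1) (kyFan_le hk hB V hV1)
  · have h1 := trace_eq_sum_eigenvalues hAB
    have h2 := trace_eq_sum_eigenvalues hA
    have h3 := trace_eq_sum_eigenvalues hB
    have htr : Matrix.trace (A + B) = Matrix.trace A + Matrix.trace B := Matrix.trace_add A B
    have hcast : ((∑ i, hAB.eigenvalues i : ℝ) : ℂ)
        = ((∑ i, hA.eigenvalues i + ∑ i, hB.eigenvalues i : ℝ) : ℂ) := by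
      push_cast
      rw [← h1, ← h2, ← h3, htr]
    have hval : ∑ i, hAB.eigenvalues i = ∑ i, hA.eigenvalues i + ∑ i, hB.eigenvalues i :=
      Complex.ofReal_inj.mp hcast
    rw [hval]
    simp only [Pi.add_apply]
    rw [Finset.sum_add_distrib, sum_decSort, sum_decSort]
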